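/- For every ε ∈ ℰ, every 1 ≤ i ≤ N and every ε' ∈ ℰ, the following hold in Sym_ℤ(Λ): (a) if i ∈ π₋(ε), then σᵀ_{(i)}(ε')·σᵀ_ε(ε') = σᵀ_{ε+(i)}(ε'); (b) if i ∈ π₊(ε), then σᵀ_{(i)}(ε')·σᵀ_ε(ε') = σᵀ_{(i)}(ε)·σᵀ_ε(ε') + Σ_{j<i, j∈π₋(ε)} ⟨v_{j+1}^{i}(ε)(μ_i), μ_j^∨⟩ · σᵀ_{ε+(j)}(ε'). (This is the multiplication rule for the equivariant cohomology basis of the Bott–Samelson variety Γ(μ_1,…,μ_N), expressed on restrictions to fixed points.) -/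

import Mathlib

section Weyl

variable {r : ℕ} {Λ : Type*} [AddCommGroup Λ] [Module ℤ Λ]
variable (α : Fin r → Λ) (s : Fin r → (Λ ≃ₗ[ℤ] Λ))
variable {N : ℕ} (μ : Fin N → Fin r)

/-- The product, in increasing order of indices, of the reflections `s_{μ_k}` for
`k` in a finite set of positions. -/
def oprod (t : Finset (Fin N)) : Λ ≃ₗ[ℤ] Λ :=
  ((t.sort (· ≤ ·)).map (fun k => s (μ k))).prod

/-- `v_i(ε) = Π_{k≤i, k∈π₊(ε)} s_{μ_k}` applied to `μ_i`, i.e.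
`α_i(ε) = v_i(ε)(μ_i) ∈ Λ`. -/
def alphaBS (i : Fin N) (ε : Fin N → Bool) : Λ :=
  oprod s μ (Finset.univ.filter (fun k => k ≤ i ∧ ε k = true)) (α (μ i))

/-- `v_{j+1}^i(ε) = Π_{j<k≤i, k∈π₊(ε)} s_{μ_k}`. -/
def vSeg (ε : Fin N → Bool) (j i : Fin N) : Λ ≃ₗ[ℤ] Λ :=
  oprod s μ (Finset.univ.filter (fun k => j < k ∧ k ≤ i ∧ ε k = true))

/-- The canonical embedding of `Λ` into its symmetric algebra `Sym_ℤ(Λ)`, realized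
(using the basis `bb` of the free `ℤ`-module `Λ`) as the polynomial ring
`MvPolynomial ι ℤ`: a lattice element is sent to the corresponding linear form. -/
noncomputable def toSym {ι : Type*} (bb : Module.Basis ι ℤ Λ) (x : Λ) : MvPolynomial ι ℤ :=
  (bb.repr x).sum fun i c => MvPolynomial.C c * MvPolynomial.X i

/-- `σᵀ_ε(ε') = (−1)^{l(ε)} Π_{i∈π₊(ε)} α_i(ε')` in `Sym_ℤ(Λ)` if `ε ≤ ε'`, and `0`
otherwise. -/
noncomputable def sigmaT {ι : Type*} (bb : Module.Basis ι ℤ Λ) (ε ε' : Fin N → Bool) :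
    MvPolynomial ι ℤ :=
  if ∀ i, ε i = true → ε' i = true then
    (-1) ^ (Finset.univ.filter (fun i => ε i = true)).card *
      ∏ i ∈ Finset.univ.filter (fun i => ε i = true), toSym bb (alphaBS α s μ i ε')
  else 0

end Weyl

/-- The element `(i)` of `ℰ` whose only nonzero entry is in position `i`. -/
def deltaE {N : ℕ} (i : Fin N) : Fin N → Bool := fun j => decide (j = i)

/-- Componentwise sum mod 2, `ε + (j)`. -/
def addE {N : ℕ} (ε : Fin N → Bool) (j : Fin N) : Fin N → Bool :=
  fun k => xor (ε k) (decide (k = j))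

section AuxA
variable {r : ℕ} {Λ : Type*} [AddCommGroup Λ] [Module ℤ Λ]
variable (α : Fin r → Λ) (s : Fin r → (Λ ≃ₗ[ℤ] Λ))
variable {N : ℕ} (μ : Fin N → Fin r)

lemma sort_union_of_lt (t u : Finset (Fin N)) (h : ∀ a ∈ t, ∀ b ∈ u, a < b) :
    (t ∪ u).sort (· ≤ ·) = t.sort (· ≤ ·) ++ u.sort (· ≤ ·) := by
  refine (fun hp h1 h2 => List.Perm.eq_of_pairwise' (r := (· ≤ ·)) h1 h2 hp) ?_ ?_ ?_
  · apply List.perm_of_nodup_nodup_toFinset_eq (Finset.sort_nodup _ _)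
    · rw [List.nodup_append]
      refine ⟨Finset.sort_nodup _ _, Finset.sort_nodup _ _, ?_⟩
      intro a ha b hb hab
      subst hab
      rw [Finset.mem_sort] at ha hb
      exact absurd (h a ha a hb) (lt_irrefl a)
    · simp [Finset.sort_toFinset, List.toFinset_append]
  · exact Finset.pairwise_sort _ _
  · rw [List.pairwise_append]
    refine ⟨Finset.pairwise_sort _ _, Finset.pairwise_sort _ _, fun a ha b hb => ?_⟩
    rw [Finset.mem_sort] at ha hb
    exact (h a ha b hb).le

lemma oprod_union (t u : Finset (Fin N)) (h : ∀ a ∈ t, ∀ b ∈ u, a < b) :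
    oprod s μ (t ∪ u) = oprod s μ t * oprod s μ u := by
  unfold oprod
  rw [sort_union_of_lt t u h, List.map_append, List.prod_append]

lemma oprod_singleton (j : Fin N) : oprod s μ {j} = s (μ j) := by
  unfold oprod
  rw [Finset.sort_singleton]
  simp

lemma alphaBS_congr (j : Fin N) {ε₁ ε₂ : Fin N → Bool} (h : ∀ k, k ≤ j → ε₁ k = ε₂ k) :
    alphaBS α s μ j ε₁ = alphaBS α s μ j ε₂ := by
  unfold alphaBS
  have : (Finset.univ.filter (fun k => k ≤ j ∧ ε₁ k = true))
      = (Finset.univ.filter (fun k => k ≤ j ∧ ε₂ k = true)) := by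
    ext k
    simp only [Finset.mem_filter, Finset.mem_univ, true_and]
    constructor
    · rintro ⟨hk, he⟩; exact ⟨hk, (h k hk) ▸ he⟩
    · rintro ⟨hk, he⟩; exact ⟨hk, (h k hk) ▸ he⟩
  rw [this]
end AuxA

section Aux2
variable {r : ℕ} {Λ : Type*} [AddCommGroup Λ] [Module ℤ Λ]
variable (α : Fin r → Λ) (s : Fin r → (Λ ≃ₗ[ℤ] Λ))
variable {N : ℕ} (μ : Fin N → Fin r)
variable (coroot : Fin r → (Λ →ₗ[ℤ] ℤ))

lemma alphaBS_flip (hdiag : ∀ i, coroot i (α i) = 2)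
    (hs : ∀ i x, s i x = x - coroot i x • α i)
    (ε' : Fin N → Bool) (m i : Fin N) (hmi : m < i) (hm : ε' m = true) :
    alphaBS α s μ i ε' - alphaBS α s μ i (addE ε' m)
      = coroot (μ m)
          (oprod s μ (Finset.univ.filter fun k => m < k ∧ k ≤ i ∧ ε' k = true) (α (μ i))) •
        alphaBS α s μ m ε' := by
  set A := Finset.univ.filter (fun k => k < m ∧ ε' k = true) with hA
  set B := Finset.univ.filter (fun k => m < k ∧ k ≤ i ∧ ε' k = true) with hB
  have hAm : ∀ a ∈ A, a < m := by intro a ha; rw [hA, Finset.mem_filter] at ha; exact ha.2.1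
  have hBm : ∀ b ∈ B, m < b := by intro b hb; rw [hB, Finset.mem_filter] at hb; exact hb.2.1
  have hPi : Finset.univ.filter (fun k => k ≤ i ∧ ε' k = true) = A ∪ ({m} ∪ B) := by
    ext k
    simp only [hA, hB, Finset.mem_filter, Finset.mem_union, Finset.mem_singleton,
      Finset.mem_univ, true_and]
    constructor
    · rintro ⟨hk, he⟩
      rcases lt_trichotomy k m with h | h | h
      · exact Or.inl ⟨h, he⟩
      · exact Or.inr (Or.inl h)
      · exact Or.inr (Or.inr ⟨h, hk, he⟩)
    · rintro (⟨h, he⟩ | h | ⟨h1, h2, he⟩)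
      · exact ⟨(h.trans hmi).le, he⟩
      · subst h; exact ⟨hmi.le, hm⟩
      · exact ⟨h2, he⟩
  have hPi'' : Finset.univ.filter (fun k => k ≤ i ∧ addE ε' m k = true) = A ∪ B := by
    ext k
    simp only [hA, hB, Finset.mem_filter, Finset.mem_union, Finset.mem_univ, true_and, addE]
    by_cases hk : k = m
    · subst hk
      simp [hm, lt_irrefl]
    · show k ∈ Finset.univ.filter (fun k => k ≤ i ∧ addE ε' m k = true) ↔ _
      rw [Finset.mem_filter]
      simp only [Finset.mem_univ, true_and, addE, hk, decide_false, Bool.xor_false]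
      constructor
      · rintro ⟨h1, h2⟩
        rcases lt_or_gt_of_ne hk with h | h
        · exact Or.inl ⟨h, h2⟩
        · exact Or.inr ⟨h, h1, h2⟩
      · rintro (⟨h1, h2⟩ | ⟨h1, h2, h3⟩)
        · exact ⟨(h1.trans hmi).le, h2⟩
        · exact ⟨h2, h3⟩
  have hPm : Finset.univ.filter (fun k => k ≤ m ∧ ε' k = true) = A ∪ {m} := by
    ext k
    simp only [hA, Finset.mem_filter, Finset.mem_union, Finset.mem_singleton,
      Finset.mem_univ, true_and]
    constructor
    · rintro ⟨hk, he⟩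
      rcases eq_or_lt_of_le hk with h | h
      · exact Or.inr h
      · exact Or.inl ⟨h, he⟩
    · rintro (⟨h, he⟩ | h)
      · exact ⟨h.le, he⟩
      · subst h; exact ⟨le_refl _, hm⟩
  have e1 : alphaBS α s μ i ε' = oprod s μ A (s (μ m) (oprod s μ B (α (μ i)))) := by
    unfold alphaBS
    rw [hPi, oprod_union s μ A ({m} ∪ B)
        (fun a ha b hb => by
          rcases Finset.mem_union.mp hb with h | h
          · exact (hAm a ha).trans_le (Finset.mem_singleton.mp h ▸ le_refl m)
          · exact (hAm a ha).trans (hBm b h)),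
      oprod_union s μ {m} B (fun a ha b hb => (Finset.mem_singleton.mp ha) ▸ hBm b hb),
      oprod_singleton]
    rfl
  have e2 : alphaBS α s μ i (addE ε' m) = oprod s μ A (oprod s μ B (α (μ i))) := by
    unfold alphaBS
    rw [hPi'', oprod_union s μ A B (fun a ha b hb => (hAm a ha).trans (hBm b hb))]
    rfl
  have e3 : alphaBS α s μ m ε' = oprod s μ A (s (μ m) (α (μ m))) := by
    unfold alphaBS
    rw [hPm, oprod_union s μ A {m}
        (fun a ha b hb => (Finset.mem_singleton.mp hb) ▸ hAm a ha), oprod_singleton]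
    rfl
  have hsm : s (μ m) (α (μ m)) = -(α (μ m)) := by
    rw [hs, hdiag]
    have h2 : (2 : ℤ) • α (μ m) = α (μ m) + α (μ m) := two_zsmul _
    rw [h2]; abel
  have h4 : s (μ m) (oprod s μ B (α (μ i))) - oprod s μ B (α (μ i))
      = -(coroot (μ m) (oprod s μ B (α (μ i))) • α (μ m)) := by
    rw [hs]; abel
  rw [e1, e2, e3, ← map_sub, h4, hsm]
  simp
end Aux2

section Aux3
variable {r : ℕ} {Λ : Type*} [AddCommGroup Λ] [Module ℤ Λ]
variable (α : Fin r → Λ) (s : Fin r → (Λ ≃ₗ[ℤ] Λ))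
variable {N : ℕ} (μ : Fin N → Fin r)
variable (coroot : Fin r → (Λ →ₗ[ℤ] ℤ))

lemma alphaBS_diff (hdiag : ∀ i, coroot i (α i) = 2)
    (hs : ∀ i x, s i x = x - coroot i x • α i) (i : Fin N) (ε : Fin N → Bool)
    (hi : ε i = true) :
    ∀ n (ε' : Fin N → Bool), (∀ k, ε k = true → ε' k = true) →
      (Finset.univ.filter (fun j => j < i ∧ ε j = false ∧ ε' j = true)).card = n →
      alphaBS α s μ i ε' - alphaBS α s μ i ε
        = ∑ j ∈ Finset.univ.filter (fun j => j < i ∧ ε j = false ∧ ε' j = true),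
            coroot (μ j) (vSeg s μ ε j i (α (μ i))) • alphaBS α s μ j ε' := by
  intro n
  induction n with
  | zero =>
    intro ε' hle hcard
    rw [Finset.card_eq_zero] at hcard
    rw [hcard, Finset.sum_empty]
    have : alphaBS α s μ i ε' = alphaBS α s μ i ε := by
      unfold alphaBS
      have hfe : (Finset.univ.filter (fun k => k ≤ i ∧ ε' k = true))
          = (Finset.univ.filter (fun k => k ≤ i ∧ ε k = true)) := by
        ext k
        simp only [Finset.mem_filter, Finset.mem_univ, true_and]
        constructor
        · rintro ⟨hk, he⟩
          refine ⟨hk, ?_⟩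
          by_contra hc
          have hkf : ε k = false := by
            cases hek : ε k
            · rfl
            · exact absurd hek hc
          have hki : k ≠ i := fun h => by rw [h, hi] at hkf; cases hkf
          have : k ∈ Finset.univ.filter (fun j => j < i ∧ ε j = false ∧ ε' j = true) := by
            simp only [Finset.mem_filter, Finset.mem_univ, true_and]
            exact ⟨lt_of_le_of_ne hk hki, hkf, he⟩
          rw [hcard] at this
          exact absurd this (Finset.notMem_empty k)
        · rintro ⟨hk, he⟩
          exact ⟨hk, hle k he⟩
      rw [hfe]
    rw [this, sub_self]
  | succ n ih =>
    intro ε' hle hcard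
    set J := Finset.univ.filter (fun j => j < i ∧ ε j = false ∧ ε' j = true) with hJdef
    have hJne : J.Nonempty := by
      rw [← Finset.card_pos, hcard]; omega
    set m := J.max' hJne with hmdef
    have hmJ : m ∈ J := J.max'_mem hJne
    have hmprop : m < i ∧ ε m = false ∧ ε' m = true := by
      have := hmJ
      rw [hJdef, Finset.mem_filter] at this
      exact this.2
    set ε'' := addE ε' m with hE''
    have hE''eq : ∀ k, k ≠ m → ε'' k = ε' k := by
      intro k hk
      simp [hE'', addE, hk]
    have hE''m : ε'' m = false := by
      simp [hE'', addE, hmprop.2.2]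
    have hle'' : ∀ k, ε k = true → ε'' k = true := by
      intro k hk
      have : k ≠ m := fun h => by rw [h, hmprop.2.1] at hk; cases hk
      rw [hE''eq k this]; exact hle k hk
    have hJ'' : Finset.univ.filter (fun j => j < i ∧ ε j = false ∧ ε'' j = true)
        = J.erase m := by
      ext k
      simp only [Finset.mem_filter, Finset.mem_univ, true_and, Finset.mem_erase, hJdef]
      constructor
      · rintro ⟨h1, h2, h3⟩
        have hk : k ≠ m := fun h => by rw [h, hE''m] at h3; cases h3
        rw [hE''eq k hk] at h3
        exact ⟨hk, h1, h2, h3⟩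
      · rintro ⟨hk, h1, h2, h3⟩
        rw [← hE''eq k hk] at h3
        exact ⟨h1, h2, h3⟩
    have hcard'' : (Finset.univ.filter (fun j => j < i ∧ ε j = false ∧ ε'' j = true)).card = n := by
      rw [hJ'', Finset.card_erase_of_mem hmJ, hcard]
      omega
    have hIH := ih ε'' hle'' hcard''
    -- flip step
    have hflip := alphaBS_flip α s μ coroot hdiag hs ε' m i hmprop.1 hmprop.2.2
    -- identify the oprod arg with vSeg
    have hseg : (Finset.univ.filter fun k => m < k ∧ k ≤ i ∧ ε' k = true)
        = (Finset.univ.filter fun k => m < k ∧ k ≤ i ∧ ε k = true) := by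
      ext k
      simp only [Finset.mem_filter, Finset.mem_univ, true_and]
      constructor
      · rintro ⟨h1, h2, h3⟩
        refine ⟨h1, h2, ?_⟩
        by_contra hc
        have hkf : ε k = false := by
          cases hek : ε k
          · rfl
          · exact absurd hek hc
        have hki : k ≠ i := fun h => by rw [h, hi] at hkf; cases hkf
        have hkJ : k ∈ J := by
          rw [hJdef]
          simp only [Finset.mem_filter, Finset.mem_univ, true_and]
          exact ⟨lt_of_le_of_ne h2 hki, hkf, h3⟩
        exact absurd h1 (not_lt.mpr (J.le_max' k hkJ))
      · rintro ⟨h1, h2, h3⟩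
        exact ⟨h1, h2, hle k h3⟩
    rw [hseg] at hflip
    have hflip' : alphaBS α s μ i ε' - alphaBS α s μ i ε''
        = coroot (μ m) (vSeg s μ ε m i (α (μ i))) • alphaBS α s μ m ε' := hflip
    -- alphaBS j ε'' = alphaBS j ε' for j ∈ J.erase m
    have hsum : ∑ j ∈ J.erase m, coroot (μ j) (vSeg s μ ε j i (α (μ i))) • alphaBS α s μ j ε''
        = ∑ j ∈ J.erase m, coroot (μ j) (vSeg s μ ε j i (α (μ i))) • alphaBS α s μ j ε' := by
      apply Finset.sum_congr rfl
      intro j hj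
      have hjm : j ≠ m := (Finset.mem_erase.mp hj).1
      have hjlt : j < m := lt_of_le_of_ne (J.le_max' j (Finset.mem_erase.mp hj).2) hjm
      have : alphaBS α s μ j ε'' = alphaBS α s μ j ε' := by
        apply alphaBS_congr
        intro k hk
        exact hE''eq k (fun h => absurd (h ▸ hk) (not_le.mpr hjlt))
      rw [this]
    rw [hJ''] at hIH
    rw [hsum] at hIH
    have : alphaBS α s μ i ε' - alphaBS α s μ i ε
        = (alphaBS α s μ i ε' - alphaBS α s μ i ε'') + (alphaBS α s μ i ε'' - alphaBS α s μ i ε) := by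
      abel
    rw [this, hflip', hIH]
    exact Finset.add_sum_erase J (fun j => coroot (μ j) (vSeg s μ ε j i (α (μ i))) • alphaBS α s μ j ε') hmJ
end Aux3

section Aux4
variable {r : ℕ} {Λ : Type*} [AddCommGroup Λ] [Module ℤ Λ]
variable (α : Fin r → Λ) (s : Fin r → (Λ ≃ₗ[ℤ] Λ))
variable {N : ℕ} (μ : Fin N → Fin r)

lemma toSym_eq {ι : Type*} (bb : Module.Basis ι ℤ Λ) (x : Λ) :
    toSym bb x = Finsupp.linearCombination ℤ MvPolynomial.X (bb.repr x) := by
  rw [toSym, Finsupp.linearCombination_apply]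
  exact Finsupp.sum_congr fun i _ => (MvPolynomial.smul_eq_C_mul _ _).symm

lemma toSym_sub {ι : Type*} (bb : Module.Basis ι ℤ Λ) (x y : Λ) :
    toSym bb (x - y) = toSym bb x - toSym bb y := by
  simp [toSym_eq, map_sub]

lemma toSym_sum {ι γ : Type*} (bb : Module.Basis ι ℤ Λ) (t : Finset γ) (f : γ → Λ) :
    toSym bb (∑ j ∈ t, f j) = ∑ j ∈ t, toSym bb (f j) := by
  simp [toSym_eq, map_sum]

lemma toSym_smul {ι : Type*} (bb : Module.Basis ι ℤ Λ) (c : ℤ) (x : Λ) :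
    toSym bb (c • x) = c • toSym bb x := by
  simp [toSym_eq, map_smul]

lemma sigmaT_delta_of_true {ι : Type*} (bb : Module.Basis ι ℤ Λ) (ε' : Fin N → Bool) (i : Fin N)
    (h : ε' i = true) :
    sigmaT α s μ bb (deltaE i) ε' = -(toSym bb (alphaBS α s μ i ε')) := by
  unfold sigmaT
  rw [if_pos (fun k hk => by simp only [deltaE, decide_eq_true_eq] at hk; exact hk ▸ h)]
  have hd : Finset.univ.filter (fun k => deltaE i k = true) = {i} := by
    ext k; simp [deltaE]
  rw [hd]
  simp

lemma sigmaT_delta_of_false {ι : Type*} (bb : Module.Basis ι ℤ Λ) (ε' : Fin N → Bool) (i : Fin N)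
    (h : ε' i = false) :
    sigmaT α s μ bb (deltaE i) ε' = 0 := by
  unfold sigmaT
  rw [if_neg]
  intro hc
  have := hc i (by simp [deltaE])
  rw [h] at this
  cases this

lemma sigmaT_delta_mul {ι : Type*} (bb : Module.Basis ι ℤ Λ) (ε ε' : Fin N → Bool) (i : Fin N)
    (h : ε i = false) :
    sigmaT α s μ bb (deltaE i) ε' * sigmaT α s μ bb ε ε'
      = sigmaT α s μ bb (addE ε i) ε' := by
  have haddi : addE ε i i = true := by simp [addE, h]
  by_cases h1 : ε' i = true
  · by_cases h2 : ∀ k, ε k = true → ε' k = true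
    · rw [sigmaT_delta_of_true α s μ bb ε' i h1]
      unfold sigmaT
      rw [if_pos h2, if_pos (by
        intro k hk
        by_cases hki : k = i
        · exact hki ▸ h1
        · simp only [addE, hki, decide_false, Bool.xor_false] at hk
          exact h2 k hk)]
      have hnot : i ∉ Finset.univ.filter (fun k => ε k = true) := by simp [h]
      have hfil : Finset.univ.filter (fun k => addE ε i k = true)
          = insert i (Finset.univ.filter (fun k => ε k = true)) := by
        ext k
        by_cases hki : k = i <;> simp [addE, hki, h]
      rw [hfil, Finset.card_insert_of_notMem hnot, Finset.prod_insert hnot]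
      ring
    · have hz : sigmaT α s μ bb ε ε' = 0 := by
        unfold sigmaT; rw [if_neg h2]
      have hz2 : sigmaT α s μ bb (addE ε i) ε' = 0 := by
        unfold sigmaT
        rw [if_neg]
        intro hc
        apply h2
        intro k hk
        have hki : k ≠ i := fun he => by rw [he, h] at hk; cases hk
        exact hc k (by simp [addE, hki, hk])
      rw [hz, hz2, mul_zero]
  · have h1' : ε' i = false := by
      cases he : ε' i
      · rfl
      · exact absurd he h1
    have hz2 : sigmaT α s μ bb (addE ε i) ε' = 0 := by
      unfold sigmaT
      rw [if_neg]
      intro hc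
      have := hc i haddi
      rw [h1'] at this
      cases this
    rw [sigmaT_delta_of_false α s μ bb ε' i h1', hz2, zero_mul]
end Aux4



/-- Multiplication rule for the equivariant cohomology basis of the Bott–Samelson
variety `Γ(μ_1,…,μ_N)`, on restrictions to fixed points: for `ε ∈ ℰ`, `1 ≤ i ≤ N`
and `ε' ∈ ℰ`:
(a) if `i ∈ π₋(ε)`, then `σᵀ_{(i)}(ε')·σᵀ_ε(ε') = σᵀ_{ε+(i)}(ε')`;
(b) if `i ∈ π₊(ε)`, then `σᵀ_{(i)}(ε')·σᵀ_ε(ε') = σᵀ_{(i)}(ε)·σᵀ_ε(ε')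
      + Σ_{j<i, j∈π₋(ε)} ⟨v_{j+1}^i(ε)(μ_i), μ_j^∨⟩·σᵀ_{ε+(j)}(ε')`. -/
theorem sigmaT_mul {r : ℕ} {Λ : Type*} [AddCommGroup Λ] [Module ℤ Λ]
    {ι : Type*} (bb : Module.Basis ι ℤ Λ)
    (α : Fin r → Λ) (coroot : Fin r → (Λ →ₗ[ℤ] ℤ))
    (hα : LinearIndependent ℤ α) (hcoroot : LinearIndependent ℤ coroot)
    (hdiag : ∀ i, coroot i (α i) = 2)
    (hoffdiag : ∀ i j, i ≠ j → coroot i (α j) ≤ 0)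
    (hsymzero : ∀ i j, coroot i (α j) = 0 → coroot j (α i) = 0)
    (s : Fin r → (Λ ≃ₗ[ℤ] Λ)) (hs : ∀ i x, s i x = x - coroot i x • α i)
    {N : ℕ} (hN : 1 ≤ N) (μ : Fin N → Fin r)
    (ε ε' : Fin N → Bool) (i : Fin N) :
    (ε i = false →
      sigmaT α s μ bb (deltaE i) ε' * sigmaT α s μ bb ε ε'
        = sigmaT α s μ bb (addE ε i) ε') ∧
    (ε i = true →
      sigmaT α s μ bb (deltaE i) ε' * sigmaT α s μ bb ε ε'
        = sigmaT α s μ bb (deltaE i) ε * sigmaT α s μ bb ε ε'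
          + ∑ j ∈ Finset.univ.filter (fun j => j < i ∧ ε j = false),
              coroot (μ j) (vSeg s μ ε j i (α (μ i))) •
                sigmaT α s μ bb (addE ε j) ε') := by
  constructor
  · exact fun h => sigmaT_delta_mul α s μ bb ε ε' i h
  · intro hi
    have hsum1 : ∀ j, ε j = false →
        sigmaT α s μ bb (addE ε j) ε'
          = sigmaT α s μ bb (deltaE j) ε' * sigmaT α s μ bb ε ε' :=
      fun j hj => (sigmaT_delta_mul α s μ bb ε ε' j hj).symm
    by_cases h2 : ∀ k, ε k = true → ε' k = true
    · have h1 : ε' i = true := h2 i hi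
      have hkey := alphaBS_diff α s μ coroot hdiag hs i ε hi
        (Finset.univ.filter (fun j => j < i ∧ ε j = false ∧ ε' j = true)).card ε' h2 rfl
      set S := sigmaT α s μ bb ε ε' with hS
      set T := Finset.univ.filter (fun j => j < i ∧ ε j = false) with hT
      set J := Finset.univ.filter (fun j => j < i ∧ ε j = false ∧ ε' j = true) with hJ
      have hJT : J ⊆ T := by
        intro j hj
        rw [hJ, Finset.mem_filter] at hj
        rw [hT, Finset.mem_filter]
        exact ⟨hj.1, hj.2.1, hj.2.2.1⟩
      have hsum2 : ∑ j ∈ T, coroot (μ j) (vSeg s μ ε j i (α (μ i))) •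
            sigmaT α s μ bb (addE ε j) ε'
          = ∑ j ∈ J, coroot (μ j) (vSeg s μ ε j i (α (μ i))) •
              (-(toSym bb (alphaBS α s μ j ε')) * S) := by
        rw [← Finset.sum_subset hJT (by
          intro j hjT hjJ
          rw [hT, Finset.mem_filter] at hjT
          have hjf : ε' j = false := by
            cases he : ε' j
            · rfl
            · exfalso
              apply hjJ
              rw [hJ, Finset.mem_filter]
              exact ⟨Finset.mem_univ j, hjT.2.1, hjT.2.2, he⟩
          rw [hsum1 j hjT.2.2, sigmaT_delta_of_false α s μ bb ε' j hjf, zero_mul, smul_zero])]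
        apply Finset.sum_congr rfl
        intro j hj
        rw [hJ, Finset.mem_filter] at hj
        rw [hsum1 j hj.2.2.1, sigmaT_delta_of_true α s μ bb ε' j hj.2.2.2]
      rw [hsum2, sigmaT_delta_of_true α s μ bb ε' i h1, sigmaT_delta_of_true α s μ bb ε i hi]
      have hpoly : toSym bb (alphaBS α s μ i ε') - toSym bb (alphaBS α s μ i ε)
          = ∑ j ∈ J, coroot (μ j) (vSeg s μ ε j i (α (μ i))) • toSym bb (alphaBS α s μ j ε') := by
        rw [← toSym_sub, hkey, toSym_sum]
        exact Finset.sum_congr rfl fun j _ => toSym_smul bb _ _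
      simp only [zsmul_eq_mul] at hpoly ⊢
      have hstep : ∑ j ∈ J, (coroot (μ j) (vSeg s μ ε j i (α (μ i))) : MvPolynomial ι ℤ) *
            (-(toSym bb (alphaBS α s μ j ε')) * S)
          = -(∑ j ∈ J, (coroot (μ j) (vSeg s μ ε j i (α (μ i))) : MvPolynomial ι ℤ) *
              toSym bb (alphaBS α s μ j ε')) * S := by
        rw [neg_mul, Finset.sum_mul, ← neg_one_mul, Finset.mul_sum]
        apply Finset.sum_congr rfl
        intro j _
        ring
      rw [hstep, ← hpoly]
      ring
    · have hz : sigmaT α s μ bb ε ε' = 0 := by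
        unfold sigmaT; rw [if_neg h2]
      have hterm : ∀ j ∈ Finset.univ.filter (fun j => j < i ∧ ε j = false),
          coroot (μ j) (vSeg s μ ε j i (α (μ i))) • sigmaT α s μ bb (addE ε j) ε' = 0 := by
        intro j hj
        rw [Finset.mem_filter] at hj
        rw [hsum1 j hj.2.2, hz, mul_zero, smul_zero]
      rw [hz, mul_zero, mul_zero, Finset.sum_congr rfl hterm, Finset.sum_const_zero, add_zero]
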